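/- Let y_l > 0 and z_l > 0, let θ_r ∈ (0, π/2) and let θ_rl be such that tan(θ_r − θ_rl) + cot θ_r ≠ 0. Define y_c := (tan(θ_r − θ_rl)·y_l + z_l)/(tan(θ_r − θ_rl) + cot θ_r) and z_c := cot θ_r · y_c. Then (y_c, z_c) = (y_l, z_l) if and only if tan θ_r = y_l/z_l. In particular, the reflection angle that places the center of the reflected beam footprint at the center of the lens is θ_r* with tan θ_r* = y_l/z_l. -/
import Mathlib


open Real

/-- Eq. (15): with footprint center `(y_c, z_c)` on the lens line given by
`y_c = (tan(θ_r − θ_rl) y_l + z_l)/(tan(θ_r − θ_rl) + cot θ_r)` and `z_c = cot θ_r · y_c`,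
the footprint center coincides with the lens center `(y_l, z_l)` iff `tan θ_r = y_l/z_l`. -/
theorem optimal_reflection_angle (y_l z_l θr θrl : ℝ)
    (hy : 0 < y_l) (hz : 0 < z_l) (hθr : θr ∈ Set.Ioo 0 (π / 2))
    (hden : Real.tan (θr - θrl) + Real.cot θr ≠ 0) :
    ((Real.tan (θr - θrl) * y_l + z_l) / (Real.tan (θr - θrl) + Real.cot θr) = y_l ∧
      Real.cot θr *
        ((Real.tan (θr - θrl) * y_l + z_l) / (Real.tan (θr - θrl) + Real.cot θr)) = z_l)
      ↔ Real.tan θr = y_l / z_l := by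
  obtain ⟨h0, h1⟩ := hθr
  have hs : 0 < Real.sin θr :=
    Real.sin_pos_of_pos_of_lt_pi h0 (lt_trans h1 (by linarith [Real.pi_pos]))
  have hc : 0 < Real.cos θr := Real.cos_pos_of_mem_Ioo ⟨by linarith [Real.pi_pos], h1⟩
  set t := Real.tan (θr - θrl) with ht
  rw [Real.tan_eq_sin_div_cos θr, Real.cot_eq_cos_div_sin] at *
  constructor
  · rintro ⟨e1, e2⟩
    rw [e1] at e2
    -- e2 : cos θr / sin θr * y_l = z_l
    rw [div_eq_div_iff hc.ne' hz.ne']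
    field_simp at e2
    nlinarith
  · intro h
    rw [div_eq_div_iff hc.ne' hz.ne'] at h
    -- h : sin θr * z_l = cos θr * y_l
    have hcot : Real.cos θr / Real.sin θr = z_l / y_l := by
      rw [div_eq_div_iff hs.ne' hy.ne']; nlinarith
    rw [hcot] at hden ⊢
    have hnum : t * y_l + z_l ≠ 0 := by
      intro hz0
      apply hden
      field_simp
      linarith
    have e1 : (t * y_l + z_l) / (t + z_l / y_l) = y_l := by
      rw [div_eq_iff hden]
      field_simp
    refine ⟨e1, ?_⟩
    rw [e1]
    field_simp
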